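/- If a Banach space X contains a complemented copy of (⊕_{n∈ℕ} ℓ_1^n)_{ℓ∞}, then X is not a Grothendieck space. -/

import Mathlib

set_option synthInstance.maxHeartbeats 1000000
set_option maxHeartbeats 1000000

open scoped ENNReal

/-- A Banach space `X` is a Grothendieck space if every weak*-convergent sequence in the
dual space `X*` converges weakly. -/
def IsGrothendieckSpace (X : Type*) [NormedAddCommGroup X] [NormedSpace ℝ X] : Prop :=
  ∀ (f : ℕ → (X →L[ℝ] ℝ)) (g : X →L[ℝ] ℝ),
    (∀ x : X, Filter.Tendsto (fun n => f n x) Filter.atTop (nhds (g x))) →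
    ∀ Φ : (X →L[ℝ] ℝ) →L[ℝ] ℝ,
      Filter.Tendsto (fun n => Φ (f n)) Filter.atTop (nhds (Φ g))

open Filter

noncomputable def ulim (𝒰 : Ultrafilter ℕ) (f : ℕ → ℝ) : ℝ := limUnder 𝒰 f

theorem ulim_spec (𝒰 : Ultrafilter ℕ) {f : ℕ → ℝ} {C : ℝ} (h : ∀ n, |f n| ≤ C) :
    Tendsto f 𝒰 (nhds (ulim 𝒰 f)) := by
  apply tendsto_nhds_limUnder
  have hmem : Set.Icc (-C) C ∈ Filter.map f ↑𝒰 := by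
    apply Filter.mem_map.mpr
    filter_upwards with n
    simp only [Set.mem_preimage, Set.mem_Icc]
    exact abs_le.mp (h n)
  obtain ⟨x, -, hx⟩ := isCompact_Icc.ultrafilter_le_nhds' (𝒰.map f) hmem
  exact ⟨x, hx⟩

theorem ulim_eq (𝒰 : Ultrafilter ℕ) {f : ℕ → ℝ} {c : ℝ} (h : Tendsto f 𝒰 (nhds c)) :
    ulim 𝒰 f = c :=
  tendsto_nhds_unique (tendsto_nhds_limUnder ⟨c, h⟩) h

noncomputable abbrev Ysp := lp (fun n : ℕ => PiLp 1 (fun _ : Fin (n + 1) => ℝ)) ⊤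

noncomputable def coordSeq (j : ℕ) (y : Ysp) (n : ℕ) : ℝ :=
  if h : j < n + 1 then y n ⟨j, h⟩ else 0

theorem PiLp_abs_le {n : ℕ} (x : PiLp 1 (fun _ : Fin (n+1) => ℝ)) (i : Fin (n+1)) :
    |x i| ≤ ‖x‖ := by
  rw [PiLp.norm_eq_sum (by norm_num)]
  simp only [ENNReal.toReal_one, Real.rpow_one, Real.norm_eq_abs, one_div_one]
  exact Finset.single_le_sum (f := fun i => |x i|) (fun i _ => abs_nonneg _) (Finset.mem_univ i)

theorem coordSeq_abs_le (j : ℕ) (y : Ysp) (n : ℕ) : |coordSeq j y n| ≤ ‖y‖ := by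
  unfold coordSeq
  split
  · exact le_trans (PiLp_abs_le (y n) _) (lp.norm_apply_le_norm ENNReal.top_ne_zero y n)
  · simpa using norm_nonneg y

theorem coordSeq_add (j : ℕ) (y z : Ysp) :
    coordSeq j (y + z) = coordSeq j y + coordSeq j z := by
  funext n
  simp only [coordSeq, Pi.add_apply]
  split
  · rw [lp.coeFn_add]; simp
  · simp

theorem coordSeq_smul (j : ℕ) (c : ℝ) (y : Ysp) :
    coordSeq j (c • y) = c • coordSeq j y := by
  funext n
  simp only [coordSeq, Pi.smul_apply, smul_eq_mul]
  split
  · rw [lp.coeFn_smul]; simp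
  · simp

noncomputable def psiVal (𝒰 : Ultrafilter ℕ) (j : ℕ) (y : Ysp) : ℝ := ulim 𝒰 (coordSeq j y)

theorem psiVal_tendsto (𝒰 : Ultrafilter ℕ) (j : ℕ) (y : Ysp) :
    Tendsto (coordSeq j y) 𝒰 (nhds (psiVal 𝒰 j y)) :=
  ulim_spec 𝒰 (coordSeq_abs_le j y)

noncomputable def psi (𝒰 : Ultrafilter ℕ) (j : ℕ) : Ysp →L[ℝ] ℝ :=
  LinearMap.mkContinuous
    { toFun := psiVal 𝒰 j
      map_add' := fun y z => ulim_eq 𝒰 (by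
        rw [coordSeq_add]
        exact (psiVal_tendsto 𝒰 j y).add (psiVal_tendsto 𝒰 j z))
      map_smul' := fun c y => ulim_eq 𝒰 (by
        rw [coordSeq_smul]
        exact (psiVal_tendsto 𝒰 j y).const_smul c) }
    1 (fun y => by
      rw [one_mul]
      have h1 : Tendsto (fun n => |coordSeq j y n|) 𝒰 (nhds |psiVal 𝒰 j y|) :=
        (psiVal_tendsto 𝒰 j y).abs
      exact le_of_tendsto h1 (Filter.Eventually.of_forall fun n => coordSeq_abs_le j y n))

theorem psi_apply (𝒰 : Ultrafilter ℕ) (j : ℕ) (y : Ysp) : psi 𝒰 j y = psiVal 𝒰 j y := rfl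

theorem sum_coord_abs_le (y : Ysp) (m n : ℕ) :
    ∑ j ∈ Finset.range m, |coordSeq j y n| ≤ ‖y‖ := by
  have hG : ∀ j, |coordSeq j y n| = if h : j < n + 1 then |y n ⟨j, h⟩| else 0 := by
    intro j; unfold coordSeq; split <;> simp
  simp_rw [hG]
  have h1 : ∑ j ∈ Finset.range m, (if h : j < n + 1 then |y n ⟨j, h⟩| else 0)
      ≤ ∑ j ∈ Finset.range (m + (n+1)), (if h : j < n + 1 then |y n ⟨j, h⟩| else 0) := by
    apply Finset.sum_le_sum_of_subset_of_nonneg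
    · exact Finset.range_subset_range.mpr (by omega)
    · intro i _ _; split <;> simp [abs_nonneg]
  have h2 : ∑ j ∈ Finset.range (m + (n+1)), (if h : j < n + 1 then |y n ⟨j, h⟩| else 0)
      = ∑ j ∈ Finset.range (n+1), (if h : j < n + 1 then |y n ⟨j, h⟩| else 0) := by
    symm
    apply Finset.sum_subset (Finset.range_subset_range.mpr (by omega))
    intro i _ hi
    rw [Finset.mem_range] at hi
    rw [dif_neg (by omega)]
  have h3 : ∑ j ∈ Finset.range (n+1), (if h : j < n + 1 then |y n ⟨j, h⟩| else 0)
      = ∑ i : Fin (n+1), |y n i| := by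
    rw [← Fin.sum_univ_eq_sum_range]
    apply Finset.sum_congr rfl
    intro i _
    rw [dif_pos i.isLt]
  have h4 : ∑ i : Fin (n+1), |y n i| = ‖y n‖ := by
    rw [PiLp.norm_eq_sum (by norm_num)]
    simp
  exact (h1.trans_eq ((h2.trans h3).trans h4)).trans (lp.norm_apply_le_norm ENNReal.top_ne_zero y n)

theorem sum_abs_psi_le (𝒰 : Ultrafilter ℕ) (y : Ysp) (m : ℕ) :
    ∑ j ∈ Finset.range m, |psi 𝒰 j y| ≤ ‖y‖ := by
  have ht : Tendsto (fun n => ∑ j ∈ Finset.range m, |coordSeq j y n|) 𝒰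
      (nhds (∑ j ∈ Finset.range m, |psi 𝒰 j y|)) := by
    apply tendsto_finset_sum
    intro j _
    exact (psiVal_tendsto 𝒰 j y).abs
  exact le_of_tendsto ht (Filter.Eventually.of_forall fun n => sum_coord_abs_le y m n)

theorem summable_abs_psi (𝒰 : Ultrafilter ℕ) (y : Ysp) :
    Summable (fun j => |psi 𝒰 j y|) :=
  summable_of_sum_range_le (fun j => abs_nonneg _) (sum_abs_psi_le 𝒰 y)

theorem summable_psi (𝒰 : Ultrafilter ℕ) (y : Ysp) : Summable (fun j => psi 𝒰 j y) :=
  (summable_abs_psi 𝒰 y).of_abs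

noncomputable def gamma (𝒰 : Ultrafilter ℕ) : Ysp →L[ℝ] ℝ :=
  LinearMap.mkContinuous
    { toFun := fun y => ∑' j, psi 𝒰 j y
      map_add' := fun y z => by
        simp_rw [map_add]
        exact Summable.tsum_add (summable_psi 𝒰 y) (summable_psi 𝒰 z)
      map_smul' := fun c y => by
        simp_rw [map_smul]
        exact Summable.tsum_const_smul c (summable_psi 𝒰 y) }
    1 (fun y => by
      rw [one_mul]
      calc ‖∑' j, psi 𝒰 j y‖ ≤ ∑' j, ‖psi 𝒰 j y‖ := by
            apply norm_tsum_le_tsum_norm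
            simpa [Real.norm_eq_abs] using summable_abs_psi 𝒰 y
        _ ≤ ‖y‖ := by
            apply Real.tsum_le_of_sum_range_le (fun j => norm_nonneg _)
            simpa [Real.norm_eq_abs] using sum_abs_psi_le 𝒰 y)

theorem gamma_apply (𝒰 : Ultrafilter ℕ) (y : Ysp) : gamma 𝒰 y = ∑' j, psi 𝒰 j y := rfl

noncomputable def cval (j m : ℕ) : ℝ := if j ≤ m then (1:ℝ)/(m+1) else 0

theorem sum_cval_le (m N : ℕ) : ∑ j ∈ Finset.range N, cval j m ≤ 1 := by
  have h1 : ∑ j ∈ Finset.range N, cval j m ≤ ∑ j ∈ Finset.range (N + (m+1)), cval j m := by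
    apply Finset.sum_le_sum_of_subset_of_nonneg (Finset.range_subset_range.mpr (by omega))
    intro i _ _
    unfold cval; split <;> positivity
  have h2 : ∑ j ∈ Finset.range (N + (m+1)), cval j m = ∑ j ∈ Finset.range (m+1), cval j m := by
    symm
    apply Finset.sum_subset (Finset.range_subset_range.mpr (by omega))
    intro i _ hi
    rw [Finset.mem_range] at hi
    unfold cval
    rw [if_neg (by omega)]
  have h3 : ∑ j ∈ Finset.range (m+1), cval j m = 1 := by
    have : ∀ j ∈ Finset.range (m+1), cval j m = (1:ℝ)/(m+1) := by
      intro j hj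
      rw [Finset.mem_range] at hj
      unfold cval
      rw [if_pos (by omega)]
    rw [Finset.sum_congr rfl this, Finset.sum_const, Finset.card_range, nsmul_eq_mul]
    push_cast
    field_simp
  rw [h2, h3] at h1
  exact h1

noncomputable def ymP (m : ℕ) : ∀ n : ℕ, PiLp 1 (fun _ : Fin (n + 1) => ℝ) :=
  fun n => WithLp.toLp 1 (fun i => cval (i : ℕ) m)

theorem ymP_norm_le (m n : ℕ) : ‖ymP m n‖ ≤ 1 := by
  rw [PiLp.norm_eq_sum (by norm_num)]
  simp only [ENNReal.toReal_one, Real.rpow_one, Real.norm_eq_abs, one_div_one]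
  have : ∀ i : Fin (n+1), |ymP m n i| = cval (i:ℕ) m := by
    intro i
    show |cval (i:ℕ) m| = cval (i:ℕ) m
    apply abs_of_nonneg
    unfold cval; split <;> positivity
  rw [Finset.sum_congr rfl (fun i _ => this i)]
  rw [Fin.sum_univ_eq_sum_range (fun j => cval j m)]
  exact sum_cval_le m (n+1)

noncomputable def ym (m : ℕ) : Ysp :=
  ⟨ymP m, memℓp_infty ⟨1, by rintro x ⟨n, rfl⟩; exact ymP_norm_le m n⟩⟩

theorem ym_norm_le (m : ℕ) : ‖ym m‖ ≤ 1 :=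
  lp.norm_le_of_forall_le zero_le_one (fun n => ymP_norm_le m n)

theorem psi_ym (𝒰 : Ultrafilter ℕ) (h𝒰 : (𝒰 : Filter ℕ) ≤ Filter.atTop) (j m : ℕ) :
    psi 𝒰 j (ym m) = cval j m := by
  rw [psi_apply]
  apply ulim_eq
  have hev : ∀ n ≥ j, coordSeq j (ym m) n = cval j m := by
    intro n hn
    unfold coordSeq
    rw [dif_pos (by omega)]
    rfl
  have : Tendsto (coordSeq j (ym m)) Filter.atTop (nhds (cval j m)) := by
    apply Filter.Tendsto.congr' _ tendsto_const_nhds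
    filter_upwards [Filter.eventually_ge_atTop j] with n hn
    exact (hev n hn).symm
  exact this.mono_left h𝒰

theorem gamma_ym (𝒰 : Ultrafilter ℕ) (h𝒰 : (𝒰 : Filter ℕ) ≤ Filter.atTop) (m : ℕ) :
    gamma 𝒰 (ym m) = 1 := by
  rw [gamma_apply]
  have h1 : ∀ j, psi 𝒰 j (ym m) = cval j m := fun j => psi_ym 𝒰 h𝒰 j m
  rw [tsum_congr h1]
  rw [tsum_eq_sum (s := Finset.range (m+1)) (by
    intro j hj
    rw [Finset.mem_range] at hj
    unfold cval
    rw [if_neg (by omega)])]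
  have : ∀ j ∈ Finset.range (m+1), cval j m = (1:ℝ)/(m+1) := by
    intro j hj
    rw [Finset.mem_range] at hj
    unfold cval; rw [if_pos (by omega)]
  rw [Finset.sum_congr rfl this, Finset.sum_const, Finset.card_range, nsmul_eq_mul]
  push_cast
  field_simp

noncomputable def phi (𝒰 : Ultrafilter ℕ) (k : ℕ) : Ysp →L[ℝ] ℝ :=
  ∑ j ∈ Finset.range (k+1), psi 𝒰 j

theorem phi_apply (𝒰 : Ultrafilter ℕ) (k : ℕ) (y : Ysp) :
    phi 𝒰 k y = ∑ j ∈ Finset.range (k+1), psi 𝒰 j y := by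
  simp [phi]

theorem phi_ym (𝒰 : Ultrafilter ℕ) (h𝒰 : (𝒰 : Filter ℕ) ≤ Filter.atTop) (k m : ℕ)
    (hm : k ≤ m) : phi 𝒰 k (ym m) = (k+1)/(m+1) := by
  rw [phi_apply]
  have h1 : ∀ j ∈ Finset.range (k+1), psi 𝒰 j (ym m) = (1:ℝ)/(m+1) := by
    intro j hj
    rw [Finset.mem_range] at hj
    rw [psi_ym 𝒰 h𝒰 j m]
    unfold cval
    rw [if_pos (by omega)]
  rw [Finset.sum_congr rfl h1, Finset.sum_const, Finset.card_range, nsmul_eq_mul]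
  push_cast
  ring

section Main

variable {X : Type*} [NormedAddCommGroup X] [NormedSpace ℝ X]

noncomputable def bigPhi (𝒰 : Ultrafilter ℕ) (V : Ysp →L[ℝ] X) : (X →L[ℝ] ℝ) →L[ℝ] ℝ :=
  LinearMap.mkContinuous
    { toFun := fun h => ulim 𝒰 (fun m => h (V (ym m)))
      map_add' := fun h₁ h₂ => ulim_eq 𝒰 (by
        have t1 := ulim_spec 𝒰 (f := fun m => h₁ (V (ym m))) (C := ‖h₁‖ * ‖V‖) (fun m => by
          calc |h₁ (V (ym m))| ≤ ‖h₁‖ * ‖V (ym m)‖ := h₁.le_opNorm _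
            _ ≤ ‖h₁‖ * (‖V‖ * ‖ym m‖) := by
                exact mul_le_mul_of_nonneg_left (V.le_opNorm _) (norm_nonneg _)
            _ ≤ ‖h₁‖ * ‖V‖ := by
                apply mul_le_mul_of_nonneg_left _ (norm_nonneg h₁)
                calc ‖V‖ * ‖ym m‖ ≤ ‖V‖ * 1 := by
                      exact mul_le_mul_of_nonneg_left (ym_norm_le m) (norm_nonneg _)
                  _ = ‖V‖ := mul_one _)
        have t2 := ulim_spec 𝒰 (f := fun m => h₂ (V (ym m))) (C := ‖h₂‖ * ‖V‖) (fun m => by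
          calc |h₂ (V (ym m))| ≤ ‖h₂‖ * ‖V (ym m)‖ := h₂.le_opNorm _
            _ ≤ ‖h₂‖ * (‖V‖ * ‖ym m‖) :=
                mul_le_mul_of_nonneg_left (V.le_opNorm _) (norm_nonneg _)
            _ ≤ ‖h₂‖ * ‖V‖ := by
                apply mul_le_mul_of_nonneg_left _ (norm_nonneg h₂)
                calc ‖V‖ * ‖ym m‖ ≤ ‖V‖ * 1 :=
                      mul_le_mul_of_nonneg_left (ym_norm_le m) (norm_nonneg _)
                  _ = ‖V‖ := mul_one _)
        simpa using t1.add t2)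
      map_smul' := fun c h => ulim_eq 𝒰 (by
        have t1 := ulim_spec 𝒰 (f := fun m => h (V (ym m))) (C := ‖h‖ * ‖V‖) (fun m => by
          calc |h (V (ym m))| ≤ ‖h‖ * ‖V (ym m)‖ := h.le_opNorm _
            _ ≤ ‖h‖ * (‖V‖ * ‖ym m‖) :=
                mul_le_mul_of_nonneg_left (V.le_opNorm _) (norm_nonneg _)
            _ ≤ ‖h‖ * ‖V‖ := by
                apply mul_le_mul_of_nonneg_left _ (norm_nonneg h)
                calc ‖V‖ * ‖ym m‖ ≤ ‖V‖ * 1 :=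
                      mul_le_mul_of_nonneg_left (ym_norm_le m) (norm_nonneg _)
                  _ = ‖V‖ := mul_one _)
        simpa using t1.const_smul c) }
    ‖V‖ (fun h => by
      have hb : ∀ m, |h (V (ym m))| ≤ ‖h‖ * ‖V‖ := fun m => by
        calc |h (V (ym m))| ≤ ‖h‖ * ‖V (ym m)‖ := h.le_opNorm _
          _ ≤ ‖h‖ * (‖V‖ * ‖ym m‖) :=
              mul_le_mul_of_nonneg_left (V.le_opNorm _) (norm_nonneg _)
          _ ≤ ‖h‖ * ‖V‖ := by
              apply mul_le_mul_of_nonneg_left _ (norm_nonneg h)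
              calc ‖V‖ * ‖ym m‖ ≤ ‖V‖ * 1 :=
                    mul_le_mul_of_nonneg_left (ym_norm_le m) (norm_nonneg _)
                _ = ‖V‖ := mul_one _
      have ht := (ulim_spec 𝒰 hb).abs
      have : |ulim 𝒰 fun m => h (V (ym m))| ≤ ‖V‖ * ‖h‖ :=
        le_of_tendsto ht (Filter.Eventually.of_forall fun m =>
          (hb m).trans (le_of_eq (mul_comm _ _)))
      simpa [Real.norm_eq_abs] using this)

theorem bigPhi_apply (𝒰 : Ultrafilter ℕ) (V : Ysp →L[ℝ] X) (h : X →L[ℝ] ℝ) :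
    bigPhi 𝒰 V h = ulim 𝒰 (fun m => h (V (ym m))) := rfl

end Main

/-- If a Banach space `X` contains a complemented copy of `(⊕_{n∈ℕ} ℓ_1^n)_{ℓ∞}`,
then `X` is not a Grothendieck space. -/
theorem stmt_2 (X : Type*) [NormedAddCommGroup X] [NormedSpace ℝ X] [CompleteSpace X]
    (U : X →L[ℝ] (lp (fun n : ℕ => PiLp 1 (fun _ : Fin (n + 1) => ℝ)) ⊤))
    (V : (lp (fun n : ℕ => PiLp 1 (fun _ : Fin (n + 1) => ℝ)) ⊤) →L[ℝ] X)
    (hUV : U.comp V =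
      ContinuousLinearMap.id ℝ (lp (fun n : ℕ => PiLp 1 (fun _ : Fin (n + 1) => ℝ)) ⊤)) :
    ¬ IsGrothendieckSpace X := by
  intro hGr
  obtain ⟨𝒰, h𝒰⟩ := Filter.exists_ultrafilter_le (Filter.atTop : Filter ℕ)
  set f : ℕ → (X →L[ℝ] ℝ) := fun k => (phi 𝒰 k).comp U with hf
  set g : X →L[ℝ] ℝ := (gamma 𝒰).comp U with hg
  have hUVz : ∀ z : Ysp, U (V z) = z := fun z => by
    have := ContinuousLinearMap.ext_iff.mp hUV z
    simpa using this
  have hconv : ∀ x : X, Tendsto (fun k => f k x) atTop (nhds (g x)) := by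
    intro x
    have hsum : HasSum (fun j => psi 𝒰 j (U x)) (gamma 𝒰 (U x)) :=
      (summable_psi 𝒰 (U x)).hasSum
    have h2 := hsum.tendsto_sum_nat.comp (tendsto_add_atTop_nat 1)
    have heq : ∀ k : ℕ, ((fun N => ∑ j ∈ Finset.range N, psi 𝒰 j (U x)) ∘ (· + 1)) k
        = f k x := by
      intro k
      simp [hf, phi_apply, Function.comp]
    have h3 := h2.congr heq
    exact h3
  have key := hGr f g hconv (bigPhi 𝒰 V)
  have hfk : ∀ k, bigPhi 𝒰 V (f k) = 0 := by
    intro k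
    rw [bigPhi_apply]
    apply ulim_eq
    have h0 : Tendsto (fun m : ℕ => ((k:ℝ)+1) * (1/((m:ℝ)+1))) Filter.atTop
        (nhds (((k:ℝ)+1) * 0)) := tendsto_one_div_add_atTop_nhds_zero_nat.const_mul _
    rw [mul_zero] at h0
    have h1 : Tendsto (fun m => f k (V (ym m))) Filter.atTop (nhds 0) := by
      apply h0.congr'
      filter_upwards [Filter.eventually_ge_atTop k] with m hm
      rw [hf]
      simp only [ContinuousLinearMap.comp_apply, hUVz]
      rw [phi_ym 𝒰 h𝒰 k m hm]
      push_cast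
      ring
    exact h1.mono_left h𝒰
  have hk : bigPhi 𝒰 V g = 1 := by
    rw [bigPhi_apply]
    apply ulim_eq
    have h1 : Tendsto (fun m => g (V (ym m))) Filter.atTop (nhds 1) := by
      have he : ∀ m : ℕ, g (V (ym m)) = 1 := fun m => by
        rw [hg]
        simp only [ContinuousLinearMap.comp_apply, hUVz]
        exact gamma_ym 𝒰 h𝒰 m
      exact tendsto_const_nhds.congr fun m => (he m).symm
    exact h1.mono_left h𝒰
  rw [hk] at key
  have key2 : Tendsto (fun _ : ℕ => (0:ℝ)) atTop (nhds 1) :=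
    key.congr fun k => hfk k
  exact absurd (tendsto_nhds_unique key2 tendsto_const_nhds) (by norm_num)
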